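/- Let q be a prime power and fix s, t ∈ F_q with s, t ≠ 0. The evolution map on states defined by: for j = 0 with sx ≠ y, (0,x,y) ↦ (0, t/(x - y/s), sx/y); for j = 0 with sx = y, (0,x,y) ↦ (1, 0, t/x); (1,0,y) ↦ (2, 0, st(1 - sy)); (2,0,y) ↦ (3, 0, sy); (3,0,y) ↦ (4, 0, s(sy - t)/t); for j = 4 with y ≠ 0, (4,0,y) ↦ (0, -s²t/y, 1); and (4,0,0) ↦ (1,0,0) — together with t ↦ st — is a bijection from the set of states with time parameter t to the set of states with time parameter st. -/

import Mathlib

/-- The valid states of the q-Painlevé I initial value space over a field `F`: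
`j = 0` with `x, y ≠ 0`, or `1 ≤ j ≤ 4` with `x = 0`. -/
def qP1States (F : Type*) [Field F] : Set (Fin 5 × F × F) :=
  {p | (p.1 = 0 ∧ p.2.1 ≠ 0 ∧ p.2.2 ≠ 0) ∨ (p.1 ≠ 0 ∧ p.2.1 = 0)}

/-- The resolved q-Painlevé I evolution on states, for parameters `s, t`. -/
def qP1Evolve {F : Type*} [Field F] [DecidableEq F] (s t : F) :
    Fin 5 × F × F → Fin 5 × F × F :=
  fun p =>
    let j := p.1; let x := p.2.1; let y := p.2.2
    if j = 0 then
      (if s * x = y then (1, 0, t / x) else (0, t / (x - y / s), s * x / y))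
    else if j = 1 then (2, 0, s * t * (1 - s * y))
    else if j = 2 then (3, 0, s * y)
    else if j = 3 then (4, 0, s * (s * y - t) / t)
    else (if y = 0 then (1, 0, 0) else (0, -(s^2) * t / y, 1))

section aux
variable {F : Type*} [Field F] [DecidableEq F] (s t : F)

/-- Inverse of the evolution map. -/
def qP1Inv : Fin 5 × F × F → Fin 5 × F × F :=
  fun p =>
    let j := p.1; let x := p.2.1; let y := p.2.2
    if j = 0 then
      (if y = 1 then (4, 0, -(s^2) * t / x)
       else (0, t * y / (x * (y - 1)), s * t / (x * (y - 1))))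
    else if j = 1 then (if y = 0 then (4, 0, 0) else (0, t / y, s * t / y))
    else if j = 2 then (1, 0, (1 - y / (s * t)) / s)
    else if j = 3 then (2, 0, y / s)
    else (3, 0, (t * y / s + t) / s)

variable {x y : F}

lemma ev0a (h : s * x = y) : qP1Evolve s t (0, x, y) = (1, 0, t / x) := by
  simp [qP1Evolve, h]

lemma ev0b (h : s * x ≠ y) :
    qP1Evolve s t (0, x, y) = (0, t / (x - y / s), s * x / y) := by
  simp [qP1Evolve, h]

lemma ev1 : qP1Evolve s t (1, 0, y) = (2, 0, s * t * (1 - s * y)) := by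
  simp [qP1Evolve]

lemma ev2 : qP1Evolve s t (2, 0, y) = (3, 0, s * y) := by
  simp [qP1Evolve]

lemma ev3 : qP1Evolve s t (3, 0, y) = (4, 0, s * (s * y - t) / t) := by
  simp [qP1Evolve]

lemma ev4a : qP1Evolve s t (4, 0, (0 : F)) = (1, 0, 0) := by
  simp [qP1Evolve]

lemma ev4b (h : y ≠ 0) : qP1Evolve s t (4, 0, y) = (0, -(s^2) * t / y, 1) := by
  simp [qP1Evolve, h]

lemma iv0a (h : y = 1) : qP1Inv s t (0, x, y) = (4, 0, -(s^2) * t / x) := by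
  simp [qP1Inv, h]

lemma iv0b (h : y ≠ 1) :
    qP1Inv s t (0, x, y) = (0, t * y / (x * (y - 1)), s * t / (x * (y - 1))) := by
  simp [qP1Inv, h]

lemma iv1a : qP1Inv s t (1, 0, (0 : F)) = (4, 0, 0) := by
  simp [qP1Inv]

lemma iv1b (h : y ≠ 0) : qP1Inv s t (1, 0, y) = (0, t / y, s * t / y) := by
  simp [qP1Inv, h]

lemma iv2 : qP1Inv s t (2, 0, y) = (1, 0, (1 - y / (s * t)) / s) := by
  simp [qP1Inv]

lemma iv3 : qP1Inv s t (3, 0, y) = (2, 0, y / s) := by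
  simp [qP1Inv]

lemma iv4 : qP1Inv s t (4, 0, y) = (3, 0, (t * y / s + t) / s) := by
  simp [qP1Inv]

end aux

/-- The resolved q-Painlevé I evolution (with time `t ↦ st`) is a
bijection from the state space (with time parameter `t`) to the state space
(with time parameter `st`); the underlying set of states is the same. -/
theorem qP1Evolve_bijOn {F : Type*} [Field F] [Fintype F] [DecidableEq F]
    (s t : F) (hs : s ≠ 0) (ht : t ≠ 0) :
    Set.BijOn (qP1Evolve s t) (qP1States F) (qP1States F) := by
  have mem0 : ∀ x y : F, x ≠ 0 → y ≠ 0 → ((0 : Fin 5), x, y) ∈ qP1States F :=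
    fun x y hx hy => Or.inl ⟨rfl, hx, hy⟩
  have memj : ∀ (j : Fin 5) (y : F), j ≠ 0 → (j, (0 : F), y) ∈ qP1States F :=
    fun j y hj => Or.inr ⟨hj, rfl⟩
  have hmaps : Set.MapsTo (qP1Evolve s t) (qP1States F) (qP1States F) := by
    rintro ⟨j, x, y⟩ hp
    rcases hp with ⟨hj, hx, hy⟩ | ⟨hj, hx⟩
    · simp only at hj hx hy; subst hj
      by_cases h : s * x = y
      · rw [ev0a s t h]; exact memj _ _ (by decide)
      · rw [ev0b s t h]
        have hxy : x - y / s ≠ 0 := by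
          intro h0
          exact h (by rw [sub_eq_zero] at h0; rw [h0]; field_simp)
        exact mem0 _ _ (div_ne_zero ht hxy) (div_ne_zero (mul_ne_zero hs hx) hy)
    · simp only at hj hx; subst hx
      fin_cases j
      · exact absurd rfl hj
      · show qP1Evolve s t (1, 0, y) ∈ qP1States F
        rw [ev1]; exact memj _ _ (by decide)
      · show qP1Evolve s t (2, 0, y) ∈ qP1States F
        rw [ev2]; exact memj _ _ (by decide)
      · show qP1Evolve s t (3, 0, y) ∈ qP1States F
        rw [ev3]; exact memj _ _ (by decide)
      · show qP1Evolve s t (4, 0, y) ∈ qP1States F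
        by_cases hy : y = 0
        · subst hy; rw [ev4a]; exact memj _ _ (by decide)
        · rw [ev4b s t hy]
          exact mem0 _ _ (div_ne_zero (by simp [hs, ht]) hy) one_ne_zero
  have hleft : Set.LeftInvOn (qP1Inv s t) (qP1Evolve s t) (qP1States F) := by
    rintro ⟨j, x, y⟩ hp
    rcases hp with ⟨hj, hx, hy⟩ | ⟨hj, hx⟩
    · simp only at hj hx hy; subst hj
      show qP1Inv s t (qP1Evolve s t (0, x, y)) = (0, x, y)
      by_cases h : s * x = y
      · have htx : t / x ≠ 0 := div_ne_zero ht hx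
        rw [ev0a s t h, iv1b s t htx]
        refine Prod.ext rfl (Prod.ext ?_ ?_) <;> field_simp <;> rw [← h] <;> ring
      · have hxy : x - y / s ≠ 0 := by
          intro h0
          exact h (by rw [sub_eq_zero] at h0; rw [h0]; field_simp)
        have hv1 : s * x / y ≠ 1 := by
          intro h1
          rw [div_eq_one_iff_eq hy] at h1
          exact h h1
        rw [ev0b s t h, iv0b s t hv1]
        have hu : t / (x - y / s) ≠ 0 := div_ne_zero ht hxy
        have hd : s * x / y - 1 ≠ 0 := sub_ne_zero.mpr hv1
        have hd' : s * x - y ≠ 0 := sub_ne_zero.mpr h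
        refine Prod.ext rfl (Prod.ext ?_ ?_) <;> field_simp <;> ring
    · simp only at hj hx; subst hx
      fin_cases j
      · exact absurd rfl hj
      · show qP1Inv s t (qP1Evolve s t (1, 0, y)) = (1, 0, y)
        rw [ev1, iv2]
        refine Prod.ext rfl (Prod.ext rfl ?_)
        field_simp
        ring
      · show qP1Inv s t (qP1Evolve s t (2, 0, y)) = (2, 0, y)
        rw [ev2, iv3]
        refine Prod.ext rfl (Prod.ext rfl ?_)
        field_simp
      · show qP1Inv s t (qP1Evolve s t (3, 0, y)) = (3, 0, y)
        rw [ev3, iv4]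
        refine Prod.ext rfl (Prod.ext rfl ?_)
        field_simp
        ring
      · show qP1Inv s t (qP1Evolve s t (4, 0, y)) = (4, 0, y)
        by_cases hy : y = 0
        · subst hy; rw [ev4a, iv1a]
        · rw [ev4b s t hy, iv0a s t rfl]
          refine Prod.ext rfl (Prod.ext rfl ?_)
          have : -(s^2) * t ≠ 0 := by simp [hs, ht]
          field_simp
  have hinj : Set.InjOn (qP1Evolve s t) (qP1States F) := hleft.injOn
  exact ((Set.toFinite _).injOn_iff_bijOn_of_mapsTo hmaps).mp hinj
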